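/- Let 0 < β₂ ≤ β₁ < 1 and ω > 0. With G*(ω) = (iω)^{β₁}/(1 + (iω)^{β₁-β₂}) (principal branch), Im G*(ω) = (ω^{β₁} sin(β₁π/2) + ω^{2β₁-β₂} sin(β₂π/2)) / (1 + ω^{2(β₁-β₂)} + 2ω^{β₁-β₂} cos((β₁-β₂)π/2)). -/

import Mathlib

open Complex Real

lemma cpow_eq (γ ω : ℝ) (hω : 0 < ω) :
    (Complex.I * ω) ^ (γ : ℂ)
      = ((ω ^ γ * Real.cos (γ * Real.pi / 2) : ℝ) : ℂ)
        + ((ω ^ γ * Real.sin (γ * Real.pi / 2) : ℝ) : ℂ) * Complex.I := by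
  have hz : (Complex.I * ω : ℂ) ≠ 0 := by
    simp [Complex.I_ne_zero, Complex.ofReal_ne_zero, hω.ne']
  have hlog : Complex.log (Complex.I * ω) = Real.log ω + (Real.pi / 2) * Complex.I := by
    rw [Complex.log]
    have habs : ‖Complex.I * ω‖ = ω := by
      simp [abs_of_pos hω]
    have harg : Complex.arg (Complex.I * ω) = Real.pi / 2 := by
      rw [mul_comm, Complex.arg_real_mul _ hω, Complex.arg_I]
    rw [habs, harg]; push_cast; ring
  rw [Complex.cpow_def_of_ne_zero hz, hlog]
  have h1 : ((Real.log ω : ℂ) + (Real.pi / 2) * Complex.I) * γ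
      = ((γ * Real.log ω : ℝ) : ℂ) + ((γ * Real.pi / 2 : ℝ) : ℂ) * Complex.I := by
    push_cast; ring
  rw [h1, Complex.exp_add, Complex.exp_mul_I, ← Complex.ofReal_exp,
    ← Real.log_rpow hω, Real.exp_log (Real.rpow_pos_of_pos hω γ)]
  rw [← Complex.ofReal_cos, ← Complex.ofReal_sin]; push_cast
  ring

theorem stmt_13 (β₁ β₂ ω : ℝ) (h2 : 0 < β₂) (h21 : β₂ ≤ β₁) (h1 : β₁ < 1) (hω : 0 < ω) :
    ((Complex.I * ω) ^ (β₁ : ℂ) / (1 + (Complex.I * ω) ^ ((β₁ - β₂ : ℝ) : ℂ))).im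
      = (ω ^ β₁ * Real.sin (β₁ * Real.pi / 2) + ω ^ (2 * β₁ - β₂) * Real.sin (β₂ * Real.pi / 2)) /
        (1 + ω ^ (2 * (β₁ - β₂)) + 2 * ω ^ (β₁ - β₂) * Real.cos ((β₁ - β₂) * Real.pi / 2)) := by
  have hsin : Real.sin (β₂ * Real.pi / 2)
      = Real.sin (β₁ * Real.pi / 2) * Real.cos ((β₁ - β₂) * Real.pi / 2)
        - Real.cos (β₁ * Real.pi / 2) * Real.sin ((β₁ - β₂) * Real.pi / 2) := by
    rw [← Real.sin_sub]; ring_nf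
  have hpy : Real.sin ((β₁ - β₂) * Real.pi / 2) ^ 2
      + Real.cos ((β₁ - β₂) * Real.pi / 2) ^ 2 = 1 := Real.sin_sq_add_cos_sq _
  rw [cpow_eq β₁ ω hω, cpow_eq (β₁ - β₂) ω hω, Complex.div_im]
  set s1 := Real.sin (β₁ * Real.pi / 2)
  set c1 := Real.cos (β₁ * Real.pi / 2)
  set s2 := Real.sin ((β₁ - β₂) * Real.pi / 2)
  set c2 := Real.cos ((β₁ - β₂) * Real.pi / 2)
  set s3 := Real.sin (β₂ * Real.pi / 2)
  set A := ω ^ β₁ with hA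
  set B := ω ^ (β₁ - β₂) with hB
  have hBB : B * B = ω ^ (2 * (β₁ - β₂)) := by
    rw [hB, ← Real.rpow_add hω]; ring_nf
  have hAB : A * B = ω ^ (2 * β₁ - β₂) := by
    rw [hA, hB, ← Real.rpow_add hω]; ring_nf
  simp only [Complex.add_re, Complex.one_re, Complex.ofReal_re, Complex.mul_re,
    Complex.I_re, Complex.I_im, Complex.ofReal_im, Complex.add_im, Complex.one_im,
    Complex.mul_im, Complex.normSq_apply, mul_zero, mul_one, zero_mul, sub_zero,
    zero_add, add_zero, zero_sub, sub_neg_eq_add]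
  have hD : (1 + B * c2) * (1 + B * c2) + B * s2 * (B * s2)
      = 1 + ω ^ (2 * (β₁ - β₂)) + 2 * B * c2 := by
    rw [← hBB]; nlinarith [hpy]
  rw [hD, div_sub_div_same]
  congr 1
  rw [hsin]
  linear_combination (s1 * c2 - c1 * s2) * hAB
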